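/- Let (Ω, A, μ) be a probability space and let (E_n)_{n≥1} be a sequence of μ-measurable sets with ∑_{n=1}^∞ μ(E_n) = ∞. Then μ(limsup_{n→∞} E_n) ≥ limsup_{Q→∞} (∑_{s=1}^{Q} μ(E_s))² / (∑_{s,t=1}^{Q} μ(E_s ∩ E_t)). -/

import Mathlib

open MeasureTheory Filter ENNReal Topology

theorem chung_erdos {Ω : Type*} [MeasurableSpace Ω] (μ : Measure Ω)
    (E : ℕ → Set Ω) (hE : ∀ i, MeasurableSet (E i)) (T : Finset ℕ) :
    (∑ s ∈ T, μ (E s)) ^ 2 ≤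
      μ (⋃ s ∈ T, E s) * ∑ s ∈ T, ∑ t ∈ T, μ (E s ∩ E t) := by
  set U : Set Ω := ⋃ s ∈ T, E s with hU
  have hUm : MeasurableSet U := MeasurableSet.biUnion T.countable_toSet (fun s _ => hE s)
  set S : Ω → ℝ≥0∞ := fun ω => ∑ s ∈ T, (E s).indicator 1 ω with hS
  have hSm : Measurable S := Finset.measurable_sum _ fun s _ =>
    (measurable_one.indicator (hE s))
  have hint1 : ∫⁻ ω, S ω ∂μ = ∑ s ∈ T, μ (E s) := by
    rw [lintegral_finset_sum _ fun s _ => measurable_one.indicator (hE s)]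
    refine Finset.sum_congr rfl fun s _ => ?_
    exact lintegral_indicator_one (hE s)
  have hint2 : ∫⁻ ω, S ω ^ (2:ℝ) ∂μ = ∑ s ∈ T, ∑ t ∈ T, μ (E s ∩ E t) := by
    have : ∀ ω, S ω ^ (2:ℝ) = ∑ s ∈ T, ∑ t ∈ T, (E s ∩ E t).indicator 1 ω := by
      intro ω
      rw [ENNReal.rpow_two, sq, hS, Finset.sum_mul_sum]
      refine Finset.sum_congr rfl fun s _ => Finset.sum_congr rfl fun t _ => ?_
      by_cases hs : ω ∈ E s <;> by_cases ht : ω ∈ E t <;>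
        simp [Set.indicator_of_mem, Set.indicator_of_notMem, hs, ht, Set.mem_inter_iff]
    simp_rw [this]
    rw [lintegral_finset_sum _ fun s _ => Finset.measurable_sum _ fun t _ =>
      measurable_one.indicator ((hE s).inter (hE t))]
    refine Finset.sum_congr rfl fun s _ => ?_
    rw [lintegral_finset_sum _ fun t _ => measurable_one.indicator ((hE s).inter (hE t))]
    refine Finset.sum_congr rfl fun t _ => ?_
    exact lintegral_indicator_one ((hE s).inter (hE t))
  have hSsupp : ∀ ω, S ω = U.indicator 1 ω * S ω := by
    intro ω
    by_cases h : ω ∈ U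
    · simp [Set.indicator_of_mem h]
    · have : S ω = 0 := by
        refine Finset.sum_eq_zero fun s hs => ?_
        have : ω ∉ E s := fun hmem => h (Set.mem_biUnion hs hmem)
        simp [Set.indicator_of_notMem this]
      simp [this, Set.indicator_of_notMem h]
  have h2 : (2:ℝ).HolderConjugate 2 := Real.HolderConjugate.two_two
  have hCS := ENNReal.lintegral_mul_le_Lp_mul_Lq μ h2
      (measurable_one.indicator hUm).aemeasurable hSm.aemeasurable
  simp only [Pi.mul_apply] at hCS
  have hind : ∫⁻ ω, U.indicator (1 : Ω → ℝ≥0∞) ω ^ (2:ℝ) ∂μ = μ U := by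
    have h' : ∀ ω, U.indicator (1 : Ω → ℝ≥0∞) ω ^ (2:ℝ) = U.indicator 1 ω := by
      intro ω; by_cases h : ω ∈ U <;>
        simp [Set.indicator_of_mem, Set.indicator_of_notMem, h]
    simp_rw [h']
    exact lintegral_indicator_one hUm
  have hSint : ∫⁻ ω, U.indicator (1 : Ω → ℝ≥0∞) ω * S ω ∂μ = ∑ s ∈ T, μ (E s) := by
    rw [← hint1]; exact lintegral_congr fun ω => (hSsupp ω).symm
  rw [hind, hint2, hSint] at hCS
  have hsq : ∀ x : ℝ≥0∞, (x ^ ((1:ℝ)/2)) ^ 2 = x := by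
    intro x
    rw [← ENNReal.rpow_natCast (x ^ ((1:ℝ)/2)) 2, ← ENNReal.rpow_mul]
    norm_num
  calc (∑ s ∈ T, μ (E s)) ^ 2
      ≤ (μ U ^ ((1:ℝ)/2) * (∑ s ∈ T, ∑ t ∈ T, μ (E s ∩ E t)) ^ ((1:ℝ)/2)) ^ 2 := by
        gcongr
    _ = μ U * ∑ s ∈ T, ∑ t ∈ T, μ (E s ∩ E t) := by rw [mul_pow, hsq, hsq]

lemma le_of_forall_one_add_sq {a m : ℝ≥0∞} (hm : m ≤ 1)
    (h : ∀ δ : ℝ≥0∞, 0 < δ → δ ≤ 1 → a ≤ (1 + δ) ^ 2 * m) : a ≤ m := by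
  refine ENNReal.le_of_forall_pos_le_add fun ε hε _ => ?_
  set δ : ℝ≥0∞ := min ((ε : ℝ≥0∞) / 3) 1 with hδ
  have hδ0 : 0 < δ := lt_min (ENNReal.div_pos (by exact_mod_cast hε.ne') (by norm_num)) one_pos
  have hδ1 : δ ≤ 1 := min_le_right _ _
  have h3δ : 3 * δ ≤ (ε : ℝ≥0∞) := by
    calc 3 * δ ≤ 3 * ((ε : ℝ≥0∞) / 3) := by gcongr; exact min_le_left _ _
      _ = ε := ENNReal.mul_div_cancel' (by norm_num) (by norm_num)
  calc a ≤ (1 + δ) ^ 2 * m := h δ hδ0 hδ1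
    _ = (1 + (2 * δ + δ * δ)) * m := by ring
    _ ≤ (1 + (2 * δ + δ * 1)) * m := by gcongr
    _ = m + (3 * δ) * m := by ring
    _ ≤ m + (3 * δ) * 1 := by gcongr
    _ ≤ m + ε := by rw [mul_one]; gcongr

/-- **Lemma 2 (divergence Borel–Cantelli).** Let `(Ω, A, μ)` be a probability space and
`(E_n)_{n≥1}` a sequence of measurable sets with `∑_{n=1}^∞ μ(E_n) = ∞`. Then
`μ(limsup E_n) ≥ limsup_{Q→∞} (∑_{s=1}^{Q} μ(E_s))² / (∑_{s,t=1}^{Q} μ(E_s ∩ E_t))`. -/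
theorem measure_limsup_ge_limsup_ratio
    {Ω : Type*} [MeasurableSpace Ω] (μ : Measure Ω) [IsProbabilityMeasure μ]
    (E : ℕ → Set Ω) (hE : ∀ i, MeasurableSet (E i))
    (hdiv : ∑' i : ℕ, μ (E (i + 1)) = ⊤) :
    Filter.limsup (fun Q : ℕ =>
        (∑ s ∈ Finset.Icc 1 Q, μ (E s)) ^ 2 /
          ∑ s ∈ Finset.Icc 1 Q, ∑ t ∈ Finset.Icc 1 Q, μ (E s ∩ E t))
      Filter.atTop ≤ μ (Filter.limsup E Filter.atTop) := by
  -- partial sums over `Icc 1 Q` tend to `⊤`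
  have h1 : Tendsto (fun Q => ∑ s ∈ Finset.Icc 1 Q, μ (E s)) atTop (𝓝 ⊤) := by
    have ht := ENNReal.tendsto_nat_tsum (fun i => μ (E (i + 1)))
    rw [hdiv] at ht
    have heq : ∀ Q : ℕ, ∑ s ∈ Finset.Icc 1 Q, μ (E s)
        = ∑ i ∈ Finset.range Q, μ (E (i + 1)) := by
      intro Q
      rw [← Finset.Ico_add_one_right_eq_Icc, Finset.sum_Ico_eq_sum_range]
      simp [add_comm]
    simpa only [heq] using ht
  -- the key estimate for each tail union
  have key : ∀ M : ℕ, Filter.limsup (fun Q : ℕ =>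
        (∑ s ∈ Finset.Icc 1 Q, μ (E s)) ^ 2 /
          ∑ s ∈ Finset.Icc 1 Q, ∑ t ∈ Finset.Icc 1 Q, μ (E s ∩ E t))
      Filter.atTop ≤ μ (⋃ i, ⋃ (_ : M + 1 ≤ i), E i) := by
    intro M
    set N := M + 1 with hN
    set C := ∑ s ∈ Finset.Icc 1 M, μ (E s) with hC
    have hCne : C ≠ ⊤ := (ENNReal.sum_lt_top.2 fun s _ => measure_lt_top μ _).ne
    have hsplit : ∀ Q : ℕ, M ≤ Q →
        ∑ s ∈ Finset.Icc 1 Q, μ (E s) = C + ∑ s ∈ Finset.Icc N Q, μ (E s) := by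
      intro Q hQ
      rw [hC, show Finset.Icc 1 M = Finset.Ioc 0 M from Finset.Icc_add_one_left_eq_Ioc 0 M,
        show Finset.Icc N Q = Finset.Ioc M Q from Finset.Icc_add_one_left_eq_Ioc M Q,
        show Finset.Icc 1 Q = Finset.Ioc 0 Q from Finset.Icc_add_one_left_eq_Ioc 0 Q,
        Finset.sum_Ioc_consecutive _ (Nat.zero_le M) hQ]
    have htail : Tendsto (fun Q => ∑ s ∈ Finset.Icc N Q, μ (E s)) atTop (𝓝 ⊤) := by
      rw [ENNReal.tendsto_nhds_top_iff_nnreal] at h1 ⊢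
      intro x
      filter_upwards [h1 (C.toNNReal + x), eventually_ge_atTop M] with Q hQ hQM
      rw [hsplit Q hQM, ENNReal.coe_add, ENNReal.coe_toNNReal hCne] at hQ
      exact (ENNReal.add_lt_add_iff_left hCne).mp hQ
    set m := μ (⋃ i, ⋃ (_ : N ≤ i), E i) with hm
    refine le_of_forall_one_add_sq prob_le_one fun δ hδ0 hδ1 => ?_
    have hδt : δ ≠ ⊤ := (lt_of_le_of_lt hδ1 ENNReal.one_lt_top).ne
    refine limsup_le_of_le isCobounded_le_of_bot ?_
    have hev := (ENNReal.tendsto_nhds_top_iff_nnreal.mp htail) (C / δ).toNNReal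
    filter_upwards [hev, eventually_ge_atTop M] with Q hQ hQM
    set A := ∑ s ∈ Finset.Icc N Q, μ (E s) with hA
    set D := ∑ s ∈ Finset.Icc N Q, ∑ t ∈ Finset.Icc N Q, μ (E s ∩ E t) with hD
    have hDne : D ≠ ⊤ :=
      (ENNReal.sum_lt_top.2 fun s _ => (ENNReal.sum_lt_top.2 fun t _ => measure_lt_top μ _)).ne
    have hCδA : C ≤ δ * A := by
      have hdivne : C / δ ≠ ⊤ := (ENNReal.div_lt_top hCne hδ0.ne').ne
      have h1' : C / δ ≤ A := le_of_lt (by rwa [ENNReal.coe_toNNReal hdivne] at hQ)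
      calc C = δ * (C / δ) := (ENNReal.mul_div_cancel hδ0.ne' hδt).symm
        _ ≤ δ * A := by gcongr
    have hA1 : ∑ s ∈ Finset.Icc 1 Q, μ (E s) ≤ (1 + δ) * A := by
      rw [hsplit Q hQM, add_mul, one_mul, add_comm]
      gcongr
    have hce := chung_erdos μ E hE (Finset.Icc N Q)
    have hmono : μ (⋃ s ∈ Finset.Icc N Q, E s) ≤ m := by
      refine measure_mono (Set.iUnion₂_subset fun i hi => ?_)
      exact Set.subset_biUnion_of_mem (Finset.mem_Icc.mp hi).1
    have hratio : A ^ 2 / D ≤ m := by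
      rcases eq_or_ne D 0 with hD0 | hD0
      · have hA0 : A ^ 2 = 0 := by
          have h' : A ^ 2 ≤ μ (⋃ s ∈ Finset.Icc N Q, E s) * D := hce
          rw [hD0, mul_zero] at h'
          exact le_antisymm h' bot_le
        simp [hA0]
      · rw [ENNReal.div_le_iff_le_mul (Or.inl hD0) (Or.inl hDne)]
        exact hce.trans (by gcongr)
    have hDsub : D ≤ ∑ s ∈ Finset.Icc 1 Q, ∑ t ∈ Finset.Icc 1 Q, μ (E s ∩ E t) := by
      have hsub : Finset.Icc N Q ⊆ Finset.Icc 1 Q := Finset.Icc_subset_Icc (by omega) le_rfl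
      calc D ≤ ∑ s ∈ Finset.Icc N Q, ∑ t ∈ Finset.Icc 1 Q, μ (E s ∩ E t) :=
            Finset.sum_le_sum fun s _ =>
              Finset.sum_le_sum_of_subset hsub
        _ ≤ _ := Finset.sum_le_sum_of_subset hsub
    calc (∑ s ∈ Finset.Icc 1 Q, μ (E s)) ^ 2 /
          ∑ s ∈ Finset.Icc 1 Q, ∑ t ∈ Finset.Icc 1 Q, μ (E s ∩ E t)
        ≤ (∑ s ∈ Finset.Icc 1 Q, μ (E s)) ^ 2 / D := by gcongr
      _ ≤ ((1 + δ) * A) ^ 2 / D := by gcongr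
      _ = (1 + δ) ^ 2 * (A ^ 2 / D) := by rw [mul_pow, mul_div_assoc]
      _ ≤ (1 + δ) ^ 2 * m := by gcongr
  -- assemble via continuity from above
  have hAnti : Antitone (fun N : ℕ => ⋃ i, ⋃ (_ : N ≤ i), E i) := by
    intro p q hpq
    exact Set.iUnion₂_subset fun i hi => Set.subset_biUnion_of_mem (hpq.trans hi)
  have hiInter := hAnti.measure_iInter (μ := μ)
    (fun N => (MeasurableSet.biUnion (Set.to_countable _)
      (fun i _ => hE i)).nullMeasurableSet) ⟨0, measure_ne_top μ _⟩
  have hlimsup : Filter.limsup E Filter.atTop = ⋂ N, ⋃ i, ⋃ (_ : N ≤ i), E i := by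
    rw [limsup_eq_iInf_iSup_of_nat]
    simp only [Set.iInf_eq_iInter, Set.iSup_eq_iUnion]
  rw [hlimsup, hiInter]
  refine le_iInf fun N => ?_
  exact (key N).trans (measure_mono (hAnti (Nat.le_succ N)))
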